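/- For the target distribution t = (1-ε, ε/(n-1), ..., ε/(n-1)) with 0 < ε < 1 and M = n, the optimal M-type approximation minimizing D(t‖p) is the uniform distribution p = (1/n,...,1/n), and the resulting divergence is D(t‖p) = log n - H(t), where H(t) = -Σ_i t_i log t_i. In particular, D(t‖p) → log n as ε → 0⁺. -/

import Mathlib

open Finset Filter

/-- Informational divergence D(t‖p) with the convention D = ⊤ if some t i > 0 but p i = 0. -/
noncomputable def Dkl {n : ℕ} (t p : Fin n → ℝ) : EReal :=
  if ∀ i, 0 < t i → 0 < p i then
    ((∑ i, if 0 < t i then t i * Real.log (t i / p i) else 0 : ℝ) : EReal)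
  else ⊤

/-- Shannon entropy (in nats). -/
noncomputable def entropy {n : ℕ} (t : Fin n → ℝ) : ℝ :=
  -∑ i, if 0 < t i then t i * Real.log (t i) else 0

/-- Summing a function of the values of a "1-ε, ε/(n-1)" vector. -/
lemma sum_two_vals {n : ℕ} (hn : 2 ≤ n) (a b : ℝ) (F : ℝ → ℝ) :
    (∑ i : Fin n, F (if i = (⟨0, lt_of_lt_of_le Nat.zero_lt_two hn⟩ : Fin n) then a else b))
      = F a + ((n : ℝ) - 1) * F b := by
  have h0 : (⟨0, by omega⟩ : Fin n) ∈ (Finset.univ : Finset (Fin n)) := Finset.mem_univ _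
  rw [← Finset.add_sum_erase _ _ h0]
  simp only [if_pos rfl]
  congr 1
  rw [Finset.sum_congr rfl (fun i hi => by
    rw [if_neg (Finset.ne_of_mem_erase hi)]),
    Finset.sum_const, nsmul_eq_mul]
  congr 1
  rw [Finset.card_erase_of_mem h0, Finset.card_univ, Fintype.card_fin]
  have : 1 ≤ n := by omega
  push_cast [Nat.cast_sub this]
  ring

theorem uniform_optimal_and_divergence_log_n
    {n : ℕ} (hn : 2 ≤ n)
    (t : ℝ → Fin n → ℝ)
    (ht : ∀ ε : ℝ, ∀ i : Fin n,
      t ε i = if i = ⟨0, by omega⟩ then 1 - ε else ε / ((n : ℝ) - 1)) :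
    (∀ ε : ℝ, 0 < ε → ε < 1 →
      (∀ c : Fin n → ℕ, ∑ i, c i = n →
        Dkl (t ε) (fun _ => 1 / (n : ℝ)) ≤ Dkl (t ε) (fun i => (c i : ℝ) / n)) ∧
      Dkl (t ε) (fun _ => 1 / (n : ℝ)) =
        ((Real.log n - entropy (t ε) : ℝ) : EReal)) ∧
    Tendsto (fun ε => Real.log n - entropy (t ε)) (nhdsWithin 0 (Set.Ioi 0))
      (nhds (Real.log n)) := by
  have hn1 : (1 : ℝ) ≤ (n : ℝ) - 1 := by
    have : (2 : ℝ) ≤ (n : ℝ) := by exact_mod_cast hn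
    linarith
  have hnpos : (0 : ℝ) < n := by positivity
  -- positivity of t ε i for ε ∈ (0,1)
  have htpos : ∀ ε : ℝ, 0 < ε → ε < 1 → ∀ i, 0 < t ε i := by
    intro ε hε0 hε1 i
    rw [ht]
    split
    · linarith
    · positivity
  -- value of Dkl at uniform
  have hval : ∀ ε : ℝ, 0 < ε → 0 < 1 → ε < 1 →
      Dkl (t ε) (fun _ => 1 / (n : ℝ)) =
        ((Real.log n - entropy (t ε) : ℝ) : EReal) := by
    intro ε hε0 _ hε1
    have hpos := htpos ε hε0 hε1
    rw [Dkl, if_pos (fun i _ => by positivity)]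
    congr 1
    have key : ∀ i, (if 0 < t ε i then t ε i * Real.log (t ε i / (1 / (n:ℝ))) else 0)
        = (if 0 < t ε i then t ε i * Real.log (t ε i) else 0) + t ε i * Real.log n := by
      intro i
      rw [if_pos (hpos i), if_pos (hpos i), div_div_eq_mul_div, div_one,
        Real.log_mul (ne_of_gt (hpos i)) (ne_of_gt hnpos)]
      ring
    rw [Finset.sum_congr rfl (fun i _ => key i), Finset.sum_add_distrib]
    have hsum1 : ∑ i, t ε i = 1 := by
      have := sum_two_vals hn (1 - ε) (ε / ((n:ℝ)-1)) id
      simp only [ht, id_eq] at *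
      rw [this]
      field_simp
      ring
    rw [← Finset.sum_mul, hsum1, one_mul, entropy]
    ring
  constructor
  · intro ε hε0 hε1
    refine ⟨?_, hval ε hε0 one_pos hε1⟩
    intro c hc
    by_cases hall : ∀ i, 0 < c i
    · -- all c i = 1
      have hc1 : ∀ i, c i = 1 := by
        by_contra h
        push_neg at h
        obtain ⟨j, hj⟩ := h
        have hj2 : 2 ≤ c j := by have := hall j; omega
        have : n = ∑ i, c i := hc.symm
        have hlt : ∑ _i : Fin n, (1 : ℕ) < ∑ i, c i := by
          apply Finset.sum_lt_sum (fun i _ => hall i) ⟨j, Finset.mem_univ j, by omega⟩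
        rw [Finset.sum_const, smul_eq_mul, mul_one, Finset.card_univ, Fintype.card_fin] at hlt
        omega
      have : (fun i => (c i : ℝ) / n) = (fun _ => 1 / (n : ℝ)) := by
        funext i; rw [hc1 i]; norm_num
      rw [this]
    · push_neg at hall
      obtain ⟨j, hj⟩ := hall
      have hj0 : c j = 0 := by omega
      have : Dkl (t ε) (fun i => (c i : ℝ) / n) = ⊤ := by
        rw [Dkl, if_neg]
        push_neg
        exact ⟨j, htpos ε hε0 hε1 j, by rw [hj0]; norm_num⟩
      rw [this]; exact le_top
  · -- tendsto
    have hent : ∀ ε : ℝ, 0 < ε → ε < 1 →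
        entropy (t ε) = -((1-ε) * Real.log (1-ε) + ε * Real.log ε
          - ε * Real.log ((n:ℝ)-1)) := by
      intro ε hε0 hε1
      rw [entropy]
      have := sum_two_vals hn (1 - ε) (ε / ((n:ℝ)-1))
        (fun x => if 0 < x then x * Real.log x else 0)
      simp only [ht]
      rw [this]
      have h1 : (0:ℝ) < 1 - ε := by linarith
      have h2 : (0:ℝ) < ε / ((n:ℝ)-1) := by positivity
      rw [if_pos h1, if_pos h2,
        Real.log_div (ne_of_gt hε0) (by linarith)]
      field_simp
      ring
    have hcont : Tendsto (fun ε : ℝ =>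
        -((1-ε) * Real.log (1-ε) + ε * Real.log ε - ε * Real.log ((n:ℝ)-1)))
        (nhds 0) (nhds 0) := by
      have h1 : Tendsto (fun ε : ℝ => (1-ε) * Real.log (1-ε)) (nhds 0) (nhds 0) := by
        have : Continuous (fun ε : ℝ => (1-ε) * Real.log (1-ε)) :=
          Real.continuous_mul_log.comp (continuous_const.sub continuous_id)
        have := this.tendsto 0
        simpa using this
      have h2 : Tendsto (fun ε : ℝ => ε * Real.log ε) (nhds 0) (nhds 0) := by
        have := Real.continuous_mul_log.tendsto 0
        simpa using this
      have h3 : Tendsto (fun ε : ℝ => ε * Real.log ((n:ℝ)-1)) (nhds 0) (nhds 0) := by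
        have := (continuous_mul_right (Real.log ((n:ℝ)-1))).tendsto 0
        simpa using this
      have := ((h1.add h2).sub h3).neg
      simpa using this
    have hEq : (fun ε => Real.log n - entropy (t ε)) =ᶠ[nhdsWithin 0 (Set.Ioi 0)]
        (fun ε => Real.log n
          + ((1-ε) * Real.log (1-ε) + ε * Real.log ε - ε * Real.log ((n:ℝ)-1))) := by
      filter_upwards [Ioo_mem_nhdsGT_of_mem (by norm_num : (0:ℝ) ∈ Set.Ico 0 1)]
        with ε hε
      rw [hent ε hε.1 hε.2]
      ring
    apply Tendsto.congr' hEq.symm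
    have : Tendsto (fun ε : ℝ => Real.log n
        + ((1-ε) * Real.log (1-ε) + ε * Real.log ε - ε * Real.log ((n:ℝ)-1)))
        (nhds 0) (nhds (Real.log n + -0)) := by
      exact tendsto_const_nhds.add (by simpa using hcont.neg)
    simpa using this.mono_left nhdsWithin_le_nhds
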